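/- Let (Ω, F, P) be a probability space with a filtration (F_t)_{t∈ℕ}, and let (X_t)_{t≥1} be a sequence of random variables such that each X_t is F_t-measurable and 0 ≤ X_t ≤ 1 almost surely. Then for every δ ∈ (0, 1), P( there exists t ≥ 1 with Σ_{s=1}^{t} X_s > 2·Σ_{s=1}^{t} E[X_s | F_{s−1}] + log(1/δ) ) ≤ δ. (The second-moment-free time-uniform concentration bound used to relate empirical squared preference errors to their conditional expectations.) -/

import Mathlib

open MeasureTheory Finset
open scoped NNReal ENNReal

lemma exp_le_one_add_two_mul {x : ℝ} (hx : x ∈ Set.Icc (0:ℝ) 1) :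
    Real.exp x ≤ 1 + 2 * x := by
  obtain ⟨h0, h1⟩ := hx
  have hconv := convexOn_exp.2 (Set.mem_univ (0:ℝ)) (Set.mem_univ (1:ℝ))
    (by linarith : (0:ℝ) ≤ 1 - x) h0 (by ring)
  simp only [smul_eq_mul, mul_zero, mul_one, zero_add, Real.exp_zero] at hconv
  have he : Real.exp 1 ≤ 3 := by
    have := Real.exp_one_lt_d9
    linarith
  nlinarith [hconv]

lemma ville_aux {Ω : Type*} {m0 : MeasurableSpace Ω} {μ : Measure Ω} [IsFiniteMeasure μ]
    {𝒢 : Filtration ℕ m0} {f : ℕ → Ω → ℝ} (hsup : Supermartingale f 𝒢 μ)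
    (hnonneg : ∀ n ω, 0 ≤ f n ω) {ε : ℝ≥0} (n : ℕ) :
    ε • μ {ω | (ε : ℝ) ≤ (range (n + 1)).sup' nonempty_range_add_one fun k => f k ω} ≤
      ENNReal.ofReal (∫ ω, f 0 ω ∂μ) := by
  set τ := fun ω => ((hittingBtwn f {y : ℝ | ↑ε ≤ y} 0 n ω : ℕ) : WithTop ℕ) with hτdef
  have hτ : IsStoppingTime 𝒢 τ :=
    hsup.stronglyAdapted.adapted.isStoppingTime_hittingBtwn measurableSet_Ici
  have hτle : ∀ ω, τ ω ≤ n := fun ω => WithTop.coe_le_coe.2 (hittingBtwn_le ω)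
  have hint_sv : Integrable (stoppedValue f τ) μ :=
    integrable_stoppedValue ℕ hτ hsup.integrable hτle
  set S := {ω | (ε : ℝ) ≤ (range (n + 1)).sup' nonempty_range_add_one fun k => f k ω} with hSdef
  have hn : Set.Icc 0 n = {k | k ≤ n} := by ext x; simp
  have h1 : ∀ ω ∈ S, (ε : ℝ) ≤ stoppedValue f τ ω := by
    intro ω hω
    simp only [hSdef, Set.mem_setOf_eq, le_sup'_iff, mem_range, Nat.lt_succ_iff] at hω
    refine stoppedValue_hittingBtwn_mem ?_
    simp only [Set.mem_setOf_eq, exists_prop, hn]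
    exact let ⟨j, hj₁, hj₂⟩ := hω; ⟨j, hj₁, hj₂⟩
  have hS_meas : MeasurableSet S :=
    measurableSet_le measurable_const
      (Finset.measurable_range_sup'' fun k _ => ((hsup.stronglyAdapted k).measurable).le (𝒢.le k))
  have h2 := setIntegral_ge_of_const_le hS_meas (measure_ne_top μ S) h1 hint_sv.integrableOn
  have h3 : ∫ ω in S, stoppedValue f τ ω ∂μ ≤ ∫ ω, stoppedValue f τ ω ∂μ :=
    setIntegral_le_integral hint_sv (Filter.Eventually.of_forall fun ω => hnonneg _ _)
  have h4 : ∫ ω, stoppedValue f τ ω ∂μ ≤ ∫ ω, f 0 ω ∂μ := by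
    have h := hsup.neg.expected_stoppedValue_mono (isStoppingTime_const 𝒢 0) hτ
      (fun ω => WithTop.coe_le_coe.2 (Nat.zero_le _)) hτle
    simp only [stoppedValue, Pi.neg_apply, integral_neg, neg_le_neg_iff] at h
    exact h
  rw [ENNReal.le_ofReal_iff_toReal_le, ENNReal.toReal_smul]
  · calc (ε : ℝ) * (μ S).toReal ≤ ∫ ω in S, stoppedValue f τ ω ∂μ := by
          rw [mul_comm]; exact h2
      _ ≤ ∫ ω, f 0 ω ∂μ := le_trans h3 h4
  · exact ENNReal.mul_ne_top (by simp) (measure_ne_top _ _)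
  · exact le_trans (mul_nonneg ε.coe_nonneg ENNReal.toReal_nonneg) (le_trans (by rw [mul_comm]; exact h2) (le_trans h3 h4))

/-- Second-moment-free time-uniform concentration bound: for a sequence of adapted random
variables with values in [0,1] a.s., with probability at least 1 − δ, simultaneously for all
t ≥ 1, Σ_{s=1}^t X_s ≤ 2·Σ_{s=1}^t E[X_s | F_{s−1}] + log(1/δ). -/
theorem time_uniform_second_moment_free_bound
    {Ω : Type*} {m0 : MeasurableSpace Ω} (μ : Measure Ω) [IsProbabilityMeasure μ]
    (ℱ : Filtration ℕ m0)
    (X : ℕ → Ω → ℝ)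
    (hmeas : ∀ t, 1 ≤ t → Measurable[ℱ t] (X t))
    (hbdd : ∀ t, 1 ≤ t → ∀ᵐ ω ∂μ, X t ω ∈ Set.Icc (0 : ℝ) 1)
    (δ : ℝ) (hδ : δ ∈ Set.Ioo (0 : ℝ) 1) :
    μ {ω | ∃ t, 1 ≤ t ∧
        (∑ s ∈ Icc 1 t, X s ω) >
          2 * (∑ s ∈ Icc 1 t, (μ[X s | ℱ (s - 1)]) ω) + Real.log (1 / δ)} ≤
      ENNReal.ofReal δ := by
  classical
  set A : ℕ → Ω → ℝ := fun s => μ[X s | ℱ (s-1)] with hA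
  set M : ℕ → Ω → ℝ :=
    fun t ω => Real.exp ((∑ s ∈ Icc 1 t, X s ω) - 2 * ∑ s ∈ Icc 1 t, A s ω) with hM
  -- adaptedness
  have hXsm : ∀ t s, 1 ≤ s → s ≤ t → StronglyMeasurable[ℱ t] (X s) :=
    fun t s h1 h2 => ((hmeas s h1).le (ℱ.mono h2)).stronglyMeasurable
  have hAsm : ∀ t s, s ≤ t → StronglyMeasurable[ℱ t] (A s) :=
    fun t s h2 => stronglyMeasurable_condExp.mono (ℱ.mono (le_trans (Nat.sub_le s 1) h2))
  have hMadp : StronglyAdapted ℱ M := by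
    intro t
    apply (Real.continuous_exp.comp_stronglyMeasurable
      (StronglyMeasurable.sub ?_ (StronglyMeasurable.const_mul ?_ 2)))
    · exact Finset.stronglyMeasurable_fun_sum _ fun s hs =>
        hXsm t s (mem_Icc.mp hs).1 (mem_Icc.mp hs).2
    · exact Finset.stronglyMeasurable_fun_sum _ fun s hs => hAsm t s (mem_Icc.mp hs).2
  -- a.e. facts
  have hAnn : ∀ s, 1 ≤ s → 0 ≤ᵐ[μ] A s := by
    intro s hs
    exact condExp_nonneg (by filter_upwards [hbdd s hs] with ω hω using hω.1)
  have hae : ∀ᵐ ω ∂μ, ∀ s, 1 ≤ s → (X s ω ∈ Set.Icc (0:ℝ) 1 ∧ 0 ≤ A s ω) := by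
    rw [ae_all_iff]
    intro s
    by_cases h : 1 ≤ s
    · filter_upwards [hbdd s h, hAnn s h] with ω h1 h2 using fun _ => ⟨h1, h2⟩
    · filter_upwards with ω using fun hs => absurd hs h
  have hMle : ∀ t, ∀ᵐ ω ∂μ, M t ω ≤ Real.exp t := by
    intro t
    filter_upwards [hae] with ω hω
    have hsum1 : (∑ s ∈ Icc 1 t, X s ω) ≤ t := by
      calc (∑ s ∈ Icc 1 t, X s ω) ≤ ∑ s ∈ Icc 1 t, (1:ℝ) :=
            Finset.sum_le_sum fun s hs => (hω s (mem_Icc.mp hs).1).1.2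
        _ = (Icc 1 t).card := by simp
        _ ≤ t := by simp [Nat.card_Icc]
    have hsum2 : 0 ≤ ∑ s ∈ Icc 1 t, A s ω :=
      Finset.sum_nonneg fun s hs => (hω s (mem_Icc.mp hs).1).2
    simp only [hM]
    exact Real.exp_le_exp.mpr (by linarith)
  have hMint : ∀ t, Integrable (M t) μ := by
    intro t
    refine Integrable.mono' (integrable_const (Real.exp t))
      ((hMadp t).mono (ℱ.le t)).aestronglyMeasurable ?_
    filter_upwards [hMle t] with ω hω
    rw [Real.norm_eq_abs, abs_of_pos (Real.exp_pos _)]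
    exact hω
  -- integrability of X
  have hXint : ∀ s, 1 ≤ s → Integrable (X s) μ := by
    intro s hs
    refine Integrable.mono' (integrable_const (1:ℝ))
      (((hmeas s hs).le (ℱ.le s)).stronglyMeasurable).aestronglyMeasurable ?_
    filter_upwards [hbdd s hs] with ω hω
    rw [Real.norm_eq_abs, abs_of_nonneg hω.1]
    exact hω.2
  -- supermartingale step
  have hstep : ∀ t, μ[M (t+1) | ℱ t] ≤ᵐ[μ] M t := by
    intro t
    set Y : Ω → ℝ := X (t+1) with hY
    set C : Ω → ℝ := A (t+1) with hC
    have hCcond : C = μ[Y | ℱ t] := rfl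
    set H : Ω → ℝ := fun ω => M t ω * Real.exp (-(2 * C ω)) with hH
    set g : Ω → ℝ := fun ω => Real.exp (Y ω) with hg
    have hsplit : M (t+1) = H * g := by
      funext ω
      simp only [hM, hH, hg, Pi.mul_apply]
      rw [Finset.sum_Icc_succ_top (Nat.le_add_left 1 t),
        Finset.sum_Icc_succ_top (Nat.le_add_left 1 t), ← Real.exp_add, ← Real.exp_add]
      congr 1
      show _ = _ + -(2 * A (t+1) ω) + X (t+1) ω
      ring
    have hHsm : StronglyMeasurable[ℱ t] H := by
      refine (hMadp t).mul (Real.continuous_exp.comp_stronglyMeasurable ?_)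
      exact (stronglyMeasurable_condExp.const_mul 2).neg
    have hg_int : Integrable g μ := by
      refine Integrable.mono' (integrable_const (Real.exp 1))
        (Real.continuous_exp.comp_stronglyMeasurable
          ((hmeas (t+1) (Nat.le_add_left 1 t)).le (ℱ.le (t+1))).stronglyMeasurable).aestronglyMeasurable ?_
      filter_upwards [hbdd (t+1) (Nat.le_add_left 1 t)] with ω hω
      rw [Real.norm_eq_abs, abs_of_pos (Real.exp_pos _)]
      exact Real.exp_le_exp.mpr hω.2
    have hHg_int : Integrable (H * g) μ := hsplit ▸ hMint (t+1)
    have hpull : μ[H * g | ℱ t] =ᵐ[μ] H * μ[g | ℱ t] :=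
      condExp_mul_of_stronglyMeasurable_left hHsm hHg_int hg_int
    have hint2 : Integrable (fun ω => 1 + 2 * Y ω) μ :=
      (integrable_const (1:ℝ)).add ((hXint (t+1) (Nat.le_add_left 1 t)).const_mul 2)
    have hcond_mono : μ[g | ℱ t] ≤ᵐ[μ] μ[(fun ω => 1 + 2 * Y ω) | ℱ t] := by
      refine condExp_mono hg_int hint2 ?_
      filter_upwards [hbdd (t+1) (Nat.le_add_left 1 t)] with ω hω
      exact exp_le_one_add_two_mul hω
    have hlin : μ[(fun ω => 1 + 2 * Y ω) | ℱ t] =ᵐ[μ] fun ω => 1 + 2 * C ω := by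
      have he : (fun ω => 1 + 2 * Y ω) = (fun _ => (1:ℝ)) + (2:ℝ) • Y := by
        funext ω; simp [Pi.add_apply]
      rw [he]
      refine (condExp_add (integrable_const 1)
        ((hXint (t+1) (Nat.le_add_left 1 t)).smul (2:ℝ)) _).trans ?_
      have h1 : μ[(fun _ => (1:ℝ)) | ℱ t] = fun _ => (1:ℝ) := condExp_const (ℱ.le t) 1
      have h2 : μ[(2:ℝ) • Y | ℱ t] =ᵐ[μ] (2:ℝ) • μ[Y | ℱ t] := condExp_smul 2 Y _
      filter_upwards [h2] with ω hω2
      simp only [Pi.add_apply, h1]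
      exact congrArg (fun z => 1 + z) hω2
    have hHnn : ∀ ω, 0 ≤ H ω := fun ω =>
      mul_nonneg (Real.exp_pos _).le (Real.exp_pos _).le
    rw [hsplit]
    calc μ[H * g | ℱ t] ≤ᵐ[μ] H * μ[g | ℱ t] := hpull.le
      _ ≤ᵐ[μ] M t := by
        filter_upwards [hcond_mono, hlin] with ω h2 h3
        have hle1 : (μ[g | ℱ t]) ω ≤ 1 + 2 * C ω := h3 ▸ h2
        have hle2 : 1 + 2 * C ω ≤ Real.exp (2 * C ω) := by
          have := Real.add_one_le_exp (2 * C ω); linarith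
        calc (H * μ[g | ℱ t]) ω = H ω * (μ[g | ℱ t]) ω := rfl
          _ ≤ H ω * Real.exp (2 * C ω) :=
            mul_le_mul_of_nonneg_left (hle1.trans hle2) (hHnn ω)
          _ = M t ω * (Real.exp (-(2 * C ω)) * Real.exp (2 * C ω)) := by ring
          _ = M t ω := by rw [← Real.exp_add, neg_add_cancel, Real.exp_zero, mul_one]
  have hMsup : Supermartingale M ℱ μ := supermartingale_nat hMadp hMint hstep
  -- conclusion via Ville's inequality
  have hM0 : ∫ ω, M 0 ω ∂μ = 1 := by
    have h0 : M 0 = fun _ => (1:ℝ) := by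
      funext ω
      simp [hM, Finset.Icc_eq_empty (by omega : ¬(1:ℕ) ≤ 0)]
    rw [h0]
    simp
  set ε : ℝ≥0 := Real.toNNReal (1/δ) with hε
  have hδpos := hδ.1
  have hεc : (ε : ℝ) = 1/δ := Real.coe_toNNReal _ (by positivity)
  set B : ℕ → Set Ω := fun n =>
    {ω | (ε : ℝ) ≤ (range (n + 1)).sup' nonempty_range_add_one fun k => M k ω} with hB
  have hmono : Monotone B := by
    intro a b hab ω hω
    exact le_trans hω (Finset.sup'_mono (fun k => M k ω)
      (Finset.range_subset_range.2 (Nat.add_le_add_right hab 1)) nonempty_range_add_one)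
  have hsub : {ω | ∃ t, 1 ≤ t ∧
        (∑ s ∈ Icc 1 t, X s ω) >
          2 * (∑ s ∈ Icc 1 t, (μ[X s | ℱ (s - 1)]) ω) + Real.log (1 / δ)} ⊆ ⋃ n, B n := by
    rintro ω ⟨t, ht1, hgt⟩
    refine Set.mem_iUnion.2 ⟨t, ?_⟩
    have hMt : 1/δ ≤ M t ω := by
      have h1 : Real.exp (Real.log (1/δ)) = 1/δ := Real.exp_log (by positivity)
      have h2 : Real.log (1/δ) ≤
          (∑ s ∈ Icc 1 t, X s ω) - 2 * ∑ s ∈ Icc 1 t, A s ω := by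
        simp only [hA]
        linarith
      calc 1/δ = Real.exp (Real.log (1/δ)) := h1.symm
        _ ≤ M t ω := Real.exp_le_exp.mpr h2
    show (ε : ℝ) ≤ _
    rw [hεc]
    exact le_trans hMt (Finset.le_sup' (fun k => M k ω) (mem_range.2 (Nat.lt_succ_self t)))
  calc μ {ω | ∃ t, 1 ≤ t ∧
        (∑ s ∈ Icc 1 t, X s ω) >
          2 * (∑ s ∈ Icc 1 t, (μ[X s | ℱ (s - 1)]) ω) + Real.log (1 / δ)}
      ≤ μ (⋃ n, B n) := measure_mono hsub
    _ = ⨆ n, μ (B n) := hmono.measure_iUnion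
    _ ≤ ENNReal.ofReal δ := by
      refine iSup_le fun n => ?_
      have hv := ville_aux hMsup (fun n ω => (Real.exp_pos _).le) (ε := ε) n
      rw [hM0, ENNReal.ofReal_one] at hv
      have hmul : (ε : ℝ≥0∞) * μ (B n) ≤ 1 := hv
      have hle : μ (B n) ≤ (ε : ℝ≥0∞)⁻¹ :=
        ENNReal.le_inv_iff_mul_le.2 (by rwa [mul_comm] at hmul)
      have hcoe : (ε : ℝ≥0∞) = ENNReal.ofReal (1/δ) := rfl
      rwa [hcoe, one_div, ENNReal.ofReal_inv_of_pos hδpos, inv_inv] at hle
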